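/- For all real θ with 0 < θ < π and all positive reals a, b, with z > 0 defined by cosh²(z)·sin²(θ/2) = cosh²(a) + cosh²(b) + 2cos(θ/2)cosh(a)cosh(b), one has: [arcsin(cosh(a)/cosh(z)) − arcsin(sinh(a)/sinh(z))] + [arcsin(cosh(b)/cosh(z)) − arcsin(sinh(b)/sinh(z))] = 2·arctan( sin(θ/2) / (cos(θ/2) + exp(a + b)) ). -/

import Mathlib

open Real

set_option maxHeartbeats 4000000

private lemma alg_cert (Ca Sa Cb Sb c s E : ℝ) (h1 : Ca^2 - Sa^2 = 1)
    (h2 : Cb^2 - Sb^2 = 1) (hsc : s^2 + c^2 = 1) (hE : E = (Ca+Sa)*(Cb+Sb)) :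
    (((c*Ca+Cb)^2 + s^2*(Ca*Sa)) * ((c*Cb+Ca)^2 + s^2*(Cb*Sb))
        - s^2*((c*Ca+Cb)*((c*Cb+Ca)*((Ca-Sa)*(Cb-Sb))))) * ((c+E)^2+s^2)
      = ((c+E)^2 - s^2) * ((Ca^2+Cb^2+2*c*Ca*Cb) * ((Ca^2+Cb^2+2*c*Ca*Cb) - s^2)) := by
  linear_combination (Cb^2*s^2*E + (2:ℝ)*Cb^2*c*s^2 + Cb^3*Sb*s^2*E + (2:ℝ)*Cb^3*Sb*c*s^2 + (-1:ℝ)*Cb^4*E + (-2:ℝ)*Cb^4*c + Cb^4*c^2*E + (2:ℝ)*Cb^4*c^3 + Sa*Cb^2*Sb*s^2 + (-1:ℝ)*Sa*Cb^2*Sb*c*s^2*E + (-2:ℝ)*Sa*Cb^2*Sb*c^2*s^2 + Sa*Cb^3*s^2 + Sa*Cb^3*c*s^2*E + (2:ℝ)*Sa*Cb^3*c^2*s^2 + Sa*Cb^3*Sb^2*s^2 + (-1:ℝ)*Sa*Cb^4*Sb + Sa*Cb^4*Sb*s^2 + Sa*Cb^4*Sb*c^2 + (-1:ℝ)*Sa*Cb^5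 + Sa*Cb^5*c^2 + (-1:ℝ)*Sa^2*Cb^2*Sb^2*c*s^2 + Sa^2*Cb^4*c*s^2 + (2:ℝ)*Ca*Cb*c*s^2*E + (4:ℝ)*Ca*Cb*c^2*s^2 + Ca*Cb^2*Sb*s^2 + (3:ℝ)*Ca*Cb^2*Sb*c*s^2*E + (6:ℝ)*Ca*Cb^2*Sb*c^2*s^2 + Ca*Cb^3*s^2 + (-2:ℝ)*Ca*Cb^3*c*E + (-1:ℝ)*Ca*Cb^3*c*s^2*E + (-4:ℝ)*Ca*Cb^3*c^2 + (-2:ℝ)*Ca*Cb^3*c^2*s^2 + (2:ℝ)*Ca*Cb^3*c^3*E + (4:ℝ)*Ca*Cb^3*c^4 + Ca*Cb^3*Sb^2*s^2 + (-1:ℝ)*Ca*Cb^4*Sb + Ca*Cb^4*Sb*s^2 + Ca*Cb^4*Sb*c^2 + (-1:ℝ)*Ca*Cb^5 + Ca*Cb^5*c^2 + (-1:ℝ)*Ca*Sa*Cb*Sb*s^2*E + Ca*Sa*Cb*Sb*s^4*E + (2:ℝ)*Ca*Sa*Cb*Sb*c*s^4 + (-1:ℝ)*Ca*Sa*Cb*Sb*c^2*s^2*E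 + (-2:ℝ)*Ca*Sa*Cb*Sb*c^3*s^2 + Ca*Sa*Cb^2*s^2*E + (4:ℝ)*Ca*Sa*Cb^2*c*s^2 + (2:ℝ)*Ca*Sa*Cb^2*c^2*s^2*E + (4:ℝ)*Ca*Sa*Cb^2*c^3*s^2 + (2:ℝ)*Ca*Sa*Cb^2*Sb^2*c*s^2 + (-2:ℝ)*Ca*Sa*Cb^3*Sb*c + (2:ℝ)*Ca*Sa*Cb^3*Sb*c*s^2 + (2:ℝ)*Ca*Sa*Cb^3*Sb*c^3 + (-2:ℝ)*Ca*Sa*Cb^4*c + (2:ℝ)*Ca*Sa*Cb^4*c^3 + (-1:ℝ)*Ca*Sa^2*Cb*Sb^2*s^2 + Ca*Sa^2*Cb*Sb^2*s^4 + (-1:ℝ)*Ca*Sa^2*Cb*Sb^2*c^2*s^2 + Ca*Sa^2*Cb^2*Sb*s^4 + Ca*Sa^2*Cb^2*Sb*c^2*s^2 + Ca*Sa^2*Cb^3*s^2 + (2:ℝ)*Ca*Sa^2*Cb^3*c^2*s^2 + Ca^2*s^2*E + (2:ℝ)*Ca^2*c*s^2 + Ca^2*Cb*Sb*s^2*E +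 (4:ℝ)*Ca^2*Cb*Sb*c*s^2 + (2:ℝ)*Ca^2*Cb*Sb*c^2*s^2*E + (4:ℝ)*Ca^2*Cb*Sb*c^3*s^2 + (-1:ℝ)*Ca^2*Cb^2*E + (-1:ℝ)*Ca^2*Cb^2*s^2*E + (-2:ℝ)*Ca^2*Cb^2*c + (-1:ℝ)*Ca^2*Cb^2*c^2*s^2*E + (-2:ℝ)*Ca^2*Cb^2*c^3*s^2 + Ca^2*Cb^2*c^4*E + (2:ℝ)*Ca^2*Cb^2*c^5 + (3:ℝ)*Ca^2*Cb^2*Sb^2*c*s^2 + (-2:ℝ)*Ca^2*Cb^3*Sb*c + (2:ℝ)*Ca^2*Cb^3*Sb*c*s^2 + (2:ℝ)*Ca^2*Cb^3*Sb*c^3 + (-2:ℝ)*Ca^2*Cb^4*c + (-1:ℝ)*Ca^2*Cb^4*c*s^2 + (2:ℝ)*Ca^2*Cb^4*c^3 + Ca^2*Sa*Sb*s^2 + (-1:ℝ)*Ca^2*Sa*Sb*c*s^2*E + (-2:ℝ)*Ca^2*Sa*Sb*c^2*s^2 + Ca^2*Sa*Cb*s^2 + (3:ℝ)*Ca^2*Sa*Cb*c*s^2*E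 + (6:ℝ)*Ca^2*Sa*Cb*c^2*s^2 + Ca^2*Sa*Cb*Sb^2*s^4 + Ca^2*Sa*Cb*Sb^2*c^2*s^2 + (-1:ℝ)*Ca^2*Sa*Cb^2*Sb + Ca^2*Sa*Cb^2*Sb*s^4 + (2:ℝ)*Ca^2*Sa*Cb^2*Sb*c^2*s^2 + Ca^2*Sa*Cb^2*Sb*c^4 + (-1:ℝ)*Ca^2*Sa*Cb^3 + Ca^2*Sa*Cb^3*c^2*s^2 + Ca^2*Sa*Cb^3*c^4 + (-1:ℝ)*Ca^2*Sa^2*Sb^2*c*s^2 + (2:ℝ)*Ca^2*Sa^2*Cb*Sb*c*s^2 + (3:ℝ)*Ca^2*Sa^2*Cb^2*c*s^2 + Ca^3*Sb*s^2 + Ca^3*Sb*c*s^2*E + (2:ℝ)*Ca^3*Sb*c^2*s^2 + Ca^3*Cb*s^2 + (-2:ℝ)*Ca^3*Cb*c*E + (-1:ℝ)*Ca^3*Cb*c*s^2*E + (-4:ℝ)*Ca^3*Cb*c^2 + (-2:ℝ)*Ca^3*Cb*c^2*s^2 + (2:ℝ)*Ca^3*Cb*c^3*E + (4:ℝ)*Ca^3*Cb*c^4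 + Ca^3*Cb*Sb^2*s^2 + (2:ℝ)*Ca^3*Cb*Sb^2*c^2*s^2 + (-1:ℝ)*Ca^3*Cb^2*Sb + Ca^3*Cb^2*Sb*c^2*s^2 + Ca^3*Cb^2*Sb*c^4 + (-1:ℝ)*Ca^3*Cb^3 + (-1:ℝ)*Ca^3*Cb^3*s^2 + (-1:ℝ)*Ca^3*Cb^3*c^2*s^2 + Ca^3*Cb^3*c^4 + Ca^3*Sa*s^2*E + (2:ℝ)*Ca^3*Sa*c*s^2 + (-2:ℝ)*Ca^3*Sa*Cb*Sb*c + (2:ℝ)*Ca^3*Sa*Cb*Sb*c*s^2 + (2:ℝ)*Ca^3*Sa*Cb*Sb*c^3 + (-2:ℝ)*Ca^3*Sa*Cb^2*c + (2:ℝ)*Ca^3*Sa*Cb^2*c*s^2 + (2:ℝ)*Ca^3*Sa*Cb^2*c^3 + Ca^3*Sa^2*Sb*s^2 + Ca^3*Sa^2*Cb*s^2 + (-1:ℝ)*Ca^4*E + (-2:ℝ)*Ca^4*c + Ca^4*c^2*E + (2:ℝ)*Ca^4*c^3 + Ca^4*Sb^2*c*s^2 + (-2:ℝ)*Ca^4*Cb*Sb*c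 + (2:ℝ)*Ca^4*Cb*Sb*c^3 + (-2:ℝ)*Ca^4*Cb^2*c + (-1:ℝ)*Ca^4*Cb^2*c*s^2 + (2:ℝ)*Ca^4*Cb^2*c^3 + (-1:ℝ)*Ca^4*Sa*Sb + Ca^4*Sa*Sb*s^2 + Ca^4*Sa*Sb*c^2 + (-1:ℝ)*Ca^4*Sa*Cb + Ca^4*Sa*Cb*s^2 + Ca^4*Sa*Cb*c^2 + (-1:ℝ)*Ca^5*Sb + Ca^5*Sb*c^2 + (-1:ℝ)*Ca^5*Cb + Ca^5*Cb*c^2)*hE - (Cb^2*Sb^2*s^2 + (-2:ℝ)*Cb^2*Sb^2*c^2*s^2 + (2:ℝ)*Cb^3*Sb*s^2 + Cb^3*Sb^3*s^2 + Cb^4*s^2 + (2:ℝ)*Cb^4*c^2*s^2 + (-1:ℝ)*Cb^4*Sb^2 + (2:ℝ)*Cb^4*Sb^2*s^2 + Cb^4*Sb^2*c^2 + (-2:ℝ)*Cb^5*Sb + Cb^5*Sb*s^2 + (2:ℝ)*Cb^5*Sb*c^2 + (-1:ℝ)*Cb^6 + Cb^6*c^2 + (-1:ℝ)*Sa*Cb^2*Sb^3*c*s^2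 + (-1:ℝ)*Sa*Cb^3*Sb^2*c*s^2 + Sa*Cb^4*Sb*c*s^2 + Sa*Cb^5*c*s^2 + (2:ℝ)*Ca*Cb*Sb^2*c*s^4 + (-2:ℝ)*Ca*Cb*Sb^2*c^3*s^2 + (4:ℝ)*Ca*Cb^2*Sb*c*s^2 + (2:ℝ)*Ca*Cb^2*Sb*c*s^4 + (2:ℝ)*Ca*Cb^2*Sb*c^3*s^2 + Ca*Cb^2*Sb^3*c*s^2 + (4:ℝ)*Ca*Cb^3*c*s^2 + (4:ℝ)*Ca*Cb^3*c^3*s^2 + (-2:ℝ)*Ca*Cb^3*Sb^2*c + (3:ℝ)*Ca*Cb^3*Sb^2*c*s^2 + (2:ℝ)*Ca*Cb^3*Sb^2*c^3 + (-4:ℝ)*Ca*Cb^4*Sb*c + (3:ℝ)*Ca*Cb^4*Sb*c*s^2 + (4:ℝ)*Ca*Cb^4*Sb*c^3 + (-2:ℝ)*Ca*Cb^5*c + Ca*Cb^5*c*s^2 + (2:ℝ)*Ca*Cb^5*c^3 + (-1:ℝ)*Ca*Sa*Cb*Sb^3*s^2 + Ca*Sa*Cb*Sb^3*s^4 + (-1:ℝ)*Ca*Sa*Cb*Sb^3*c^2*s^2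 + (-1:ℝ)*Ca*Sa*Cb^2*Sb^2*s^2 + (2:ℝ)*Ca*Sa*Cb^2*Sb^2*s^4 + Ca*Sa*Cb^3*Sb*s^2 + Ca*Sa*Cb^3*Sb*s^4 + (3:ℝ)*Ca*Sa*Cb^3*Sb*c^2*s^2 + Ca*Sa*Cb^4*s^2 + (2:ℝ)*Ca*Sa*Cb^4*c^2*s^2 + Ca^2*Sb^2*s^2 + (-2:ℝ)*Ca^2*Sb^2*c^2*s^2 + (2:ℝ)*Ca^2*Cb*Sb*s^2 + (4:ℝ)*Ca^2*Cb*Sb*c^2*s^2 + (-1:ℝ)*Ca^2*Cb*Sb^3*s^2 + (2:ℝ)*Ca^2*Cb*Sb^3*s^4 + Ca^2*Cb^2*s^2 + (6:ℝ)*Ca^2*Cb^2*c^2*s^2 + (-1:ℝ)*Ca^2*Cb^2*Sb^2 + (-1:ℝ)*Ca^2*Cb^2*Sb^2*s^2 + (4:ℝ)*Ca^2*Cb^2*Sb^2*s^4 + (3:ℝ)*Ca^2*Cb^2*Sb^2*c^2*s^2 + Ca^2*Cb^2*Sb^2*c^4 + (-2:ℝ)*Ca^2*Cb^3*Sb + Ca^2*Cb^3*Sb*s^2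 + (2:ℝ)*Ca^2*Cb^3*Sb*s^4 + (6:ℝ)*Ca^2*Cb^3*Sb*c^2*s^2 + (2:ℝ)*Ca^2*Cb^3*Sb*c^4 + (-1:ℝ)*Ca^2*Cb^4 + Ca^2*Cb^4*s^2 + (3:ℝ)*Ca^2*Cb^4*c^2*s^2 + Ca^2*Cb^4*c^4 + (-1:ℝ)*Ca^2*Sa*Sb^3*c*s^2 + Ca^2*Sa*Cb*Sb^2*c*s^2 + (5:ℝ)*Ca^2*Sa*Cb^2*Sb*c*s^2 + (3:ℝ)*Ca^2*Sa*Cb^3*c*s^2 + (2:ℝ)*Ca^3*Sb*c*s^2 + (-1:ℝ)*Ca^3*Sb^3*c*s^2 + (2:ℝ)*Ca^3*Cb*c*s^2 + (-2:ℝ)*Ca^3*Cb*Sb^2*c + (3:ℝ)*Ca^3*Cb*Sb^2*c*s^2 + (2:ℝ)*Ca^3*Cb*Sb^2*c^3 + (-4:ℝ)*Ca^3*Cb^2*Sb*c + (9:ℝ)*Ca^3*Cb^2*Sb*c*s^2 + (4:ℝ)*Ca^3*Cb^2*Sb*c^3 + (-2:ℝ)*Ca^3*Cb^3*c + (5:ℝ)*Ca^3*Cb^3*c*s^2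 + (2:ℝ)*Ca^3*Cb^3*c^3 + Ca^3*Sa*Sb^2*s^2 + (2:ℝ)*Ca^3*Sa*Cb*Sb*s^2 + Ca^3*Sa*Cb^2*s^2 + (-1:ℝ)*Ca^4*Sb^2 + (2:ℝ)*Ca^4*Sb^2*s^2 + Ca^4*Sb^2*c^2 + (-2:ℝ)*Ca^4*Cb*Sb + (4:ℝ)*Ca^4*Cb*Sb*s^2 + (2:ℝ)*Ca^4*Cb*Sb*c^2 + (-1:ℝ)*Ca^4*Cb^2 + (2:ℝ)*Ca^4*Cb^2*s^2 + Ca^4*Cb^2*c^2)*h1 - ((-1:ℝ)*Cb^2*s^2 + (2:ℝ)*Cb^2*c^2*s^2 + (-1:ℝ)*Cb^3*Sb*s^2 + Cb^4 + (-2:ℝ)*Cb^4*s^2 + (-1:ℝ)*Cb^4*c^2 + Sa*Cb^2*Sb*c*s^2 + (3:ℝ)*Sa*Cb^3*c*s^2 + (-2:ℝ)*Ca*Cb*c*s^4 + (2:ℝ)*Ca*Cb*c^3*s^2 + (-1:ℝ)*Ca*Cb^2*Sb*c*s^2 + (2:ℝ)*Ca*Cb^3*c + (-1:ℝ)*Ca*Cb^3*c*s^2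 + (-2:ℝ)*Ca*Cb^3*c^3 + Ca*Sa*Cb*Sb*s^2 + (-1:ℝ)*Ca*Sa*Cb*Sb*s^4 + Ca*Sa*Cb*Sb*c^2*s^2 + (3:ℝ)*Ca*Sa*Cb^2*s^2 + (-2:ℝ)*Ca*Sa*Cb^2*s^4 + (4:ℝ)*Ca*Sa*Cb^2*c^2*s^2 + (2:ℝ)*Ca*Sa*Cb^3*Sb*s^2 + (-2:ℝ)*Ca*Sa*Cb^4 + (4:ℝ)*Ca*Sa*Cb^4*s^2 + (2:ℝ)*Ca*Sa*Cb^4*c^2 + (-1:ℝ)*Ca^2*s^2 + (2:ℝ)*Ca^2*c^2*s^2 + Ca^2*Cb*Sb*s^2 + (-2:ℝ)*Ca^2*Cb*Sb*s^4 + Ca^2*Cb^2 + (3:ℝ)*Ca^2*Cb^2*s^2 + (-4:ℝ)*Ca^2*Cb^2*s^4 + Ca^2*Cb^2*c^2*s^2 + (-1:ℝ)*Ca^2*Cb^2*c^4 + (2:ℝ)*Ca^2*Cb^3*Sb*s^2 + (-2:ℝ)*Ca^2*Cb^4 + (4:ℝ)*Ca^2*Cb^4*s^2 + (2:ℝ)*Ca^2*Cb^4*c^2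 + Ca^2*Sa*Sb*c*s^2 + (3:ℝ)*Ca^2*Sa*Cb*c*s^2 + (2:ℝ)*Ca^2*Sa*Cb*c*s^4 + (2:ℝ)*Ca^2*Sa*Cb*c^3*s^2 + (4:ℝ)*Ca^2*Sa*Cb^2*Sb*c*s^2 + (-4:ℝ)*Ca^2*Sa*Cb^3*c + (8:ℝ)*Ca^2*Sa*Cb^3*c*s^2 + (4:ℝ)*Ca^2*Sa*Cb^3*c^3 + Ca^3*Sb*c*s^2 + (2:ℝ)*Ca^3*Cb*c + Ca^3*Cb*c*s^2 + (2:ℝ)*Ca^3*Cb*c*s^4 + (-2:ℝ)*Ca^3*Cb*c^3 + (2:ℝ)*Ca^3*Cb*c^3*s^2 + (4:ℝ)*Ca^3*Cb^2*Sb*c*s^2 + (-4:ℝ)*Ca^3*Cb^3*c + (8:ℝ)*Ca^3*Cb^3*c*s^2 + (4:ℝ)*Ca^3*Cb^3*c^3 + Ca^3*Sa*s^2 + (2:ℝ)*Ca^3*Sa*Cb*Sb*s^4 + (2:ℝ)*Ca^3*Sa*Cb*Sb*c^2*s^2 + (-2:ℝ)*Ca^3*Sa*Cb^2 + (4:ℝ)*Ca^3*Sa*Cb^2*s^4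 + (6:ℝ)*Ca^3*Sa*Cb^2*c^2*s^2 + (2:ℝ)*Ca^3*Sa*Cb^2*c^4 + Ca^4 + (-1:ℝ)*Ca^4*c^2 + (2:ℝ)*Ca^4*Cb*Sb*s^4 + (2:ℝ)*Ca^4*Cb*Sb*c^2*s^2 + (-2:ℝ)*Ca^4*Cb^2 + (4:ℝ)*Ca^4*Cb^2*s^4 + (6:ℝ)*Ca^4*Cb^2*c^2*s^2 + (2:ℝ)*Ca^4*Cb^2*c^4 + (-4:ℝ)*Ca^4*Sa*Cb*c + (4:ℝ)*Ca^4*Sa*Cb*c*s^2 + (4:ℝ)*Ca^4*Sa*Cb*c^3 + (-4:ℝ)*Ca^5*Cb*c + (4:ℝ)*Ca^5*Cb*c*s^2 + (4:ℝ)*Ca^5*Cb*c^3 + (-2:ℝ)*Ca^5*Sa + (2:ℝ)*Ca^5*Sa*s^2 + (2:ℝ)*Ca^5*Sa*c^2 + (-2:ℝ)*Ca^6 + (2:ℝ)*Ca^6*s^2 + (2:ℝ)*Ca^6*c^2)*h2 + ((-1:ℝ)*Cb^2*s^2 + Cb^3*Sb*s^2 + Cb^4 + Cb^4*c^2 + (-2:ℝ)*Cb^5*Sb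 + (-2:ℝ)*Cb^6 + (-1:ℝ)*Sa*Cb^2*Sb*c*s^2 + Sa*Cb^3*c*s^2 + (2:ℝ)*Sa*Cb^4*Sb*c + (2:ℝ)*Sa*Cb^5*c + Ca*Cb^2*Sb*c*s^2 + (2:ℝ)*Ca*Cb^3*c + (-3:ℝ)*Ca*Cb^3*c*s^2 + (2:ℝ)*Ca*Cb^3*c^3 + (-2:ℝ)*Ca*Cb^4*Sb*c + (-2:ℝ)*Ca*Cb^5*c + Ca*Sa*Cb*Sb*s^2 + Ca*Sa*Cb*Sb*s^4 + (-1:ℝ)*Ca*Sa*Cb*Sb*c^2*s^2 + (3:ℝ)*Ca*Sa*Cb^2*s^2 + (2:ℝ)*Ca*Sa*Cb^2*c^2*s^2 + (-2:ℝ)*Ca*Sa*Cb^3*Sb*s^2 + (4:ℝ)*Ca*Sa*Cb^3*Sb*c^2 + (-2:ℝ)*Ca*Sa*Cb^4 + (-2:ℝ)*Ca*Sa*Cb^4*s^2 + (4:ℝ)*Ca*Sa*Cb^4*c^2 + (4:ℝ)*Ca*Sa*Cb^5*Sb + (4:ℝ)*Ca*Sa*Cb^6 + (-1:ℝ)*Ca^2*s^2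 + (3:ℝ)*Ca^2*Cb*Sb*s^2 + (2:ℝ)*Ca^2*Cb*Sb*c^2*s^2 + Ca^2*Cb^2 + (3:ℝ)*Ca^2*Cb^2*s^2 + (2:ℝ)*Ca^2*Cb^2*c^2 + (-1:ℝ)*Ca^2*Cb^2*c^2*s^2 + Ca^2*Cb^2*c^4 + (-2:ℝ)*Ca^2*Cb^3*Sb + (-4:ℝ)*Ca^2*Cb^3*Sb*s^2 + (2:ℝ)*Ca^2*Cb^3*Sb*c^2 + (-4:ℝ)*Ca^2*Cb^4 + (-4:ℝ)*Ca^2*Cb^4*s^2 + (2:ℝ)*Ca^2*Cb^4*c^2 + (4:ℝ)*Ca^2*Cb^5*Sb + (4:ℝ)*Ca^2*Cb^6 + (-1:ℝ)*Ca^2*Sa*Sb*c*s^2 + Ca^2*Sa*Cb*c*s^2 + (2:ℝ)*Ca^2*Sa*Cb^2*Sb*c + (2:ℝ)*Ca^2*Sa*Cb^2*Sb*c*s^2 + (2:ℝ)*Ca^2*Sa*Cb^2*Sb*c^3 + (-2:ℝ)*Ca^2*Sa*Cb^3*c + (2:ℝ)*Ca^2*Sa*Cb^3*c*s^2 + (2:ℝ)*Ca^2*Sa*Cb^3*c^3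 + (8:ℝ)*Ca^2*Sa*Cb^4*Sb*c + (8:ℝ)*Ca^2*Sa*Cb^5*c + Ca^3*Sb*c*s^2 + (2:ℝ)*Ca^3*Cb*c + (-3:ℝ)*Ca^3*Cb*c*s^2 + (2:ℝ)*Ca^3*Cb*c^3 + (-2:ℝ)*Ca^3*Cb^2*Sb*c + (2:ℝ)*Ca^3*Cb^2*Sb*c*s^2 + (2:ℝ)*Ca^3*Cb^2*Sb*c^3 + (-6:ℝ)*Ca^3*Cb^3*c + (2:ℝ)*Ca^3*Cb^3*c*s^2 + (2:ℝ)*Ca^3*Cb^3*c^3 + (8:ℝ)*Ca^3*Cb^4*Sb*c + (8:ℝ)*Ca^3*Cb^5*c + Ca^3*Sa*s^2 + (-2:ℝ)*Ca^3*Sa*Cb*Sb*s^2 + (4:ℝ)*Ca^3*Sa*Cb*Sb*c^2 + (-2:ℝ)*Ca^3*Sa*Cb^2 + (-4:ℝ)*Ca^3*Sa*Cb^2*s^2 + (2:ℝ)*Ca^3*Sa*Cb^2*c^2 + (4:ℝ)*Ca^3*Sa*Cb^3*Sb + (4:ℝ)*Ca^3*Sa*Cb^3*Sb*s^2 + (4:ℝ)*Ca^3*Sa*Cb^3*Sb*c^2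 + (4:ℝ)*Ca^3*Sa*Cb^4 + (4:ℝ)*Ca^3*Sa*Cb^4*s^2 + (4:ℝ)*Ca^3*Sa*Cb^4*c^2 + Ca^4 + Ca^4*c^2 + (-2:ℝ)*Ca^4*Cb*Sb + (-2:ℝ)*Ca^4*Cb*Sb*s^2 + (4:ℝ)*Ca^4*Cb*Sb*c^2 + (-4:ℝ)*Ca^4*Cb^2 + (-4:ℝ)*Ca^4*Cb^2*s^2 + (2:ℝ)*Ca^4*Cb^2*c^2 + (4:ℝ)*Ca^4*Cb^3*Sb + (4:ℝ)*Ca^4*Cb^3*Sb*s^2 + (4:ℝ)*Ca^4*Cb^3*Sb*c^2 + (4:ℝ)*Ca^4*Cb^4 + (4:ℝ)*Ca^4*Cb^4*s^2 + (4:ℝ)*Ca^4*Cb^4*c^2 + (2:ℝ)*Ca^4*Sa*Sb*c + (-2:ℝ)*Ca^4*Sa*Cb*c + (8:ℝ)*Ca^4*Sa*Cb^2*Sb*c + (8:ℝ)*Ca^4*Sa*Cb^3*c + (2:ℝ)*Ca^5*Sb*c + (-2:ℝ)*Ca^5*Cb*c + (8:ℝ)*Ca^5*Cb^2*Sb*c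 + (8:ℝ)*Ca^5*Cb^3*c + (-2:ℝ)*Ca^5*Sa + (4:ℝ)*Ca^5*Sa*Cb*Sb + (4:ℝ)*Ca^5*Sa*Cb^2 + (-2:ℝ)*Ca^6 + (4:ℝ)*Ca^6*Cb*Sb + (4:ℝ)*Ca^6*Cb^2)*hsc

theorem stmt_3 (θ a b z : ℝ) (hθ0 : 0 < θ) (hθπ : θ < Real.pi)
    (ha : 0 < a) (hb : 0 < b) (hz : 0 < z)
    (hrel : Real.cosh z ^ 2 * Real.sin (θ / 2) ^ 2 =
      Real.cosh a ^ 2 + Real.cosh b ^ 2 +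
        2 * Real.cos (θ / 2) * Real.cosh a * Real.cosh b) :
    (Real.arcsin (Real.cosh a / Real.cosh z) - Real.arcsin (Real.sinh a / Real.sinh z)) +
        (Real.arcsin (Real.cosh b / Real.cosh z) - Real.arcsin (Real.sinh b / Real.sinh z)) =
      2 * Real.arctan (Real.sin (θ / 2) / (Real.cos (θ / 2) + Real.exp (a + b))) := by
  have hπ := Real.pi_pos
  set s := Real.sin (θ/2) with hs_def
  set c := Real.cos (θ/2) with hc_def
  set Ca := Real.cosh a with hCa_def
  set Sa := Real.sinh a with hSa_def
  set Cb := Real.cosh b with hCb_def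
  set Sb := Real.sinh b with hSb_def
  set Cz := Real.cosh z with hCz_def
  set Sz := Real.sinh z with hSz_def
  set E := Real.exp (a + b) with hE_def
  have hs : 0 < s := Real.sin_pos_of_pos_of_lt_pi (by linarith) (by linarith)
  have hc : 0 < c := Real.cos_pos_of_mem_Ioo ⟨by linarith, by linarith⟩
  have hsc : s^2 + c^2 = 1 := Real.sin_sq_add_cos_sq _
  have h1 : Ca^2 - Sa^2 = 1 := Real.cosh_sq_sub_sinh_sq a
  have h2 : Cb^2 - Sb^2 = 1 := Real.cosh_sq_sub_sinh_sq b
  have h3 : Cz^2 - Sz^2 = 1 := Real.cosh_sq_sub_sinh_sq z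
  have hCap : 0 < Ca := Real.cosh_pos a
  have hCbp : 0 < Cb := Real.cosh_pos b
  have hCzp : 0 < Cz := Real.cosh_pos z
  have hSap : 0 < Sa := by rw [hSa_def]; exact Real.sinh_pos_iff.mpr ha
  have hSbp : 0 < Sb := by rw [hSb_def]; exact Real.sinh_pos_iff.mpr hb
  have hSzp : 0 < Sz := by rw [hSz_def]; exact Real.sinh_pos_iff.mpr hz
  have hEp : 0 < E := Real.exp_pos _
  have hQa : (Cz^2 - Ca^2) * s^2 = (c*Ca+Cb)^2 := by linear_combination hrel - Ca^2*hsc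
  have hQb : (Cz^2 - Cb^2) * s^2 = (c*Cb+Ca)^2 := by linear_combination hrel - Cb^2*hsc
  have hQa' : (Sz^2 - Sa^2) * s^2 = (c*Ca+Cb)^2 := by
    linear_combination hQa - s^2*h3 + s^2*h1
  have hQb' : (Sz^2 - Sb^2) * s^2 = (c*Cb+Ca)^2 := by
    linear_combination hQb - s^2*h3 + s^2*h2
  have hvap : 0 < c*Ca+Cb := by positivity
  have hvbp : 0 < c*Cb+Ca := by positivity
  have hs2 : 0 < s^2 := by positivity
  have sqle : ∀ u v : ℝ, 0 < u → 0 < v → (v^2 - u^2) * s^2 = (c*Ca+Cb)^2 ∨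
      (v^2 - u^2) * s^2 = (c*Cb+Ca)^2 → u ≤ v := by
    intro u v hu hv h
    have h5 : 0 ≤ (v^2 - u^2) * s^2 := by rcases h with h | h <;> rw [h] <;> positivity
    have h4 : 0 ≤ v^2 - u^2 := le_of_mul_le_mul_right (by simpa using h5) hs2
    exact le_of_pow_le_pow_left₀ two_ne_zero hv.le (by linarith)
  have hCaCz : Ca ≤ Cz := sqle Ca Cz hCap hCzp (Or.inl hQa)
  have hCbCz : Cb ≤ Cz := sqle Cb Cz hCbp hCzp (Or.inr hQb)
  have hSaSz : Sa ≤ Sz := sqle Sa Sz hSap hSzp (Or.inl hQa')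
  have hSbSz : Sb ≤ Sz := sqle Sb Sz hSbp hSzp (Or.inr hQb')
  -- sin and cos of the four arcsin values
  have sinA1 : Real.sin (Real.arcsin (Ca/Cz)) = Ca/Cz :=
    Real.sin_arcsin (le_trans (by norm_num : (-1:ℝ) ≤ 0) (by positivity)) ((div_le_one hCzp).mpr hCaCz)
  have sinA2 : Real.sin (Real.arcsin (Cb/Cz)) = Cb/Cz :=
    Real.sin_arcsin (le_trans (by norm_num : (-1:ℝ) ≤ 0) (by positivity)) ((div_le_one hCzp).mpr hCbCz)
  have sinB1 : Real.sin (Real.arcsin (Sa/Sz)) = Sa/Sz :=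
    Real.sin_arcsin (le_trans (by norm_num : (-1:ℝ) ≤ 0) (by positivity)) ((div_le_one hSzp).mpr hSaSz)
  have sinB2 : Real.sin (Real.arcsin (Sb/Sz)) = Sb/Sz :=
    Real.sin_arcsin (le_trans (by norm_num : (-1:ℝ) ≤ 0) (by positivity)) ((div_le_one hSzp).mpr hSbSz)
  have cosA1 : Real.cos (Real.arcsin (Ca/Cz)) = (c*Ca+Cb)/(s*Cz) := by
    rw [Real.cos_arcsin]
    have h : 1 - (Ca/Cz)^2 = ((c*Ca+Cb)/(s*Cz))^2 := by
      field_simp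
      linear_combination hQa
    rw [h, Real.sqrt_sq (by positivity)]
  have cosA2 : Real.cos (Real.arcsin (Cb/Cz)) = (c*Cb+Ca)/(s*Cz) := by
    rw [Real.cos_arcsin]
    have h : 1 - (Cb/Cz)^2 = ((c*Cb+Ca)/(s*Cz))^2 := by
      field_simp
      linear_combination hQb
    rw [h, Real.sqrt_sq (by positivity)]
  have cosB1 : Real.cos (Real.arcsin (Sa/Sz)) = (c*Ca+Cb)/(s*Sz) := by
    rw [Real.cos_arcsin]
    have h : 1 - (Sa/Sz)^2 = ((c*Ca+Cb)/(s*Sz))^2 := by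
      field_simp
      linear_combination hQa'
    rw [h, Real.sqrt_sq (by positivity)]
  have cosB2 : Real.cos (Real.arcsin (Sb/Sz)) = (c*Cb+Ca)/(s*Sz) := by
    rw [Real.cos_arcsin]
    have h : 1 - (Sb/Sz)^2 = ((c*Cb+Ca)/(s*Sz))^2 := by
      field_simp
      linear_combination hQb'
    rw [h, Real.sqrt_sq (by positivity)]
  -- cosine of the left-hand side
  have hcosL : Real.cos ((Real.arcsin (Ca/Cz) - Real.arcsin (Sa/Sz)) +
      (Real.arcsin (Cb/Cz) - Real.arcsin (Sb/Sz))) =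
      (((c*Ca+Cb)^2 + s^2*(Ca*Sa)) * ((c*Cb+Ca)^2 + s^2*(Cb*Sb))
        - s^2*((c*Ca+Cb)*((c*Cb+Ca)*((Ca-Sa)*(Cb-Sb))))) / (s^4*(Cz*Sz)^2) := by
    rw [Real.cos_add, Real.cos_sub, Real.cos_sub, Real.sin_sub, Real.sin_sub,
      sinA1, cosA1, sinB1, cosB1, sinA2, cosA2, sinB2, cosB2]
    field_simp
  -- cosine of the right-hand side
  have hcE : 0 < c + E := by positivity
  have hcosR : Real.cos (2 * Real.arctan (s / (c + E))) =
      ((c+E)^2 - s^2) / ((c+E)^2 + s^2) := by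
    rw [Real.cos_two_mul, Real.cos_sq_arctan, div_pow]
    have hne : c + E ≠ 0 := ne_of_gt hcE
    have hne2 : (c+E)^2 + s^2 ≠ 0 := by positivity
    field_simp
    ring
  have hE : E = (Ca+Sa)*(Cb+Sb) := by
    rw [hE_def, Real.exp_add, ← Real.cosh_add_sinh, ← Real.cosh_add_sinh]
  have hP : s^4*(Cz*Sz)^2
      = (Ca^2+Cb^2+2*c*Ca*Cb) * ((Ca^2+Cb^2+2*c*Ca*Cb) - s^2) := by
    linear_combination (-(s^4*Cz^2))*h3 + (s^2*Cz^2 + (Ca^2+Cb^2+2*c*Ca*Cb) - s^2)*hrel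
  have hfrac : Real.cos ((Real.arcsin (Ca/Cz) - Real.arcsin (Sa/Sz)) +
      (Real.arcsin (Cb/Cz) - Real.arcsin (Sb/Sz))) =
      Real.cos (2 * Real.arctan (s / (c + E))) := by
    rw [hcosL, hcosR, div_eq_div_iff (by positivity) (by positivity), hP]
    linear_combination alg_cert Ca Sa Cb Sb c s E h1 h2 hsc hE
  -- range bounds
  have haz : a ≤ z := by
    have habs : |a| ≤ |z| := Real.cosh_le_cosh.mp (by rw [← hCa_def, ← hCz_def]; exact hCaCz)
    calc a ≤ |a| := le_abs_self a
    _ ≤ |z| := habs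
    _ = z := abs_of_pos hz
  have hbz : b ≤ z := by
    have habs : |b| ≤ |z| := Real.cosh_le_cosh.mp (by rw [← hCb_def, ← hCz_def]; exact hCbCz)
    calc b ≤ |b| := le_abs_self b
    _ ≤ |z| := habs
    _ = z := abs_of_pos hz
  have hBA1 : Real.arcsin (Sa/Sz) ≤ Real.arcsin (Ca/Cz) := by
    apply Real.monotone_arcsin
    rw [div_le_div_iff₀ hSzp hCzp]
    have h0 : 0 ≤ Real.sinh (z - a) := Real.sinh_nonneg_iff.mpr (by linarith)
    rw [Real.sinh_sub] at h0
    linarith [h0]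
  have hBA2 : Real.arcsin (Sb/Sz) ≤ Real.arcsin (Cb/Cz) := by
    apply Real.monotone_arcsin
    rw [div_le_div_iff₀ hSzp hCzp]
    have h0 : 0 ≤ Real.sinh (z - b) := Real.sinh_nonneg_iff.mpr (by linarith)
    rw [Real.sinh_sub] at h0
    linarith [h0]
  have hA1le : Real.arcsin (Ca/Cz) ≤ Real.pi/2 := Real.arcsin_le_pi_div_two _
  have hA2le : Real.arcsin (Cb/Cz) ≤ Real.pi/2 := Real.arcsin_le_pi_div_two _
  have hB1ge : 0 ≤ Real.arcsin (Sa/Sz) := Real.arcsin_nonneg.mpr (by positivity)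
  have hB2ge : 0 ≤ Real.arcsin (Sb/Sz) := Real.arcsin_nonneg.mpr (by positivity)
  have htpos : 0 < Real.arctan (s / (c + E)) := by rw [← Real.arctan_zero]; exact Real.arctan_strictMono (by positivity)
  have htlt : Real.arctan (s / (c + E)) < Real.pi/2 := Real.arctan_lt_pi_div_two _
  exact Real.injOn_cos
    (Set.mem_Icc.mpr ⟨by linarith, by linarith⟩)
    (Set.mem_Icc.mpr ⟨by linarith, by linarith⟩) hfrac
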